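/- Let L ≥ 1. Let θ_1,…,θ_L, a_1,…,a_L, b_1,…,b_L be real numbers and set Θ = diag(e^{iθ_1},…,e^{iθ_L}). Let Δθ_1,…,Δθ_L be independent real-valued random variables with E[cos Δθ_ℓ] = χ and E[sin Δθ_ℓ] = 0 for all ℓ, and set Φ = diag(e^{iΔθ_1},…,e^{iΔθ_L}). Let h̄_a, h̄_b ∈ ℂ^L have entries h̄_{a,ℓ} = e^{i a_ℓ} and h̄_{b,ℓ} = e^{i b_ℓ}. Let h̃_a, h̃_b be ℂ^L-valued random vectors with mean zero, E[h̃_a h̃_a^H] = I_L and E[h̃_b h̃_b^H] = I_L, such that h̃_a, h̃_b, and (Δθ_1,…,Δθ_L) are mutually independent. For ε, β > 0 define h_a = √(ε/(ε+1)) h̄_a + √(1/(ε+1)) h̃_a and h_b = √(β/(β+1)) h̄_b + √(1/(β+1)) h̃_b. Then E[|h_b^T Θ Φ h_a|²] = (ε β Γ̃ + L(ε + β) + L)/((ε+1)(β+1)), where Γ̃ = L + 2χ² Σ_{1 ≤ m < n ≤ L} cos((θ_n + a_n + b_n) − (θ_m + a_m + b_m)). -/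

import Mathlib

open MeasureTheory ProbabilityTheory Complex Finset

section Helpers
variable {Ω : Type*} [MeasurableSpace Ω] {μ : Measure Ω}

lemma memLp_conj {p : ENNReal} {f : Ω → ℂ} (hf : MemLp f p μ) :
    MemLp (fun ω => (starRingEnd ℂ) (f ω)) p μ := by
  refine MemLp.of_le hf ?_ (Filter.Eventually.of_forall fun ω => by simp)
  exact (Complex.continuous_conj.comp_aestronglyMeasurable hf.1)

lemma l2_mul_integrable {f g : Ω → ℂ} (hf : MemLp f 2 μ) (hg : MemLp g 2 μ) :
    Integrable (fun ω => f ω * g ω) μ := by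
  rw [← memLp_one_iff_integrable]
  have h := hg.smul (φ := f) hf (p := 2) (q := 2) (r := 1)
  exact h

lemma indep_integral_mul_complex {X Y : Ω → ℂ} (h : IndepFun X Y μ)
    (hX : Integrable X μ) (hY : Integrable Y μ) :
    ∫ ω, X ω * Y ω ∂μ = (∫ ω, X ω ∂μ) * ∫ ω, Y ω ∂μ := by
  have hXY : Integrable (fun ω => X ω * Y ω) μ := h.integrable_mul hX hY
  have hrr : Integrable (fun ω => (X ω).re * (Y ω).re) μ :=
    ((h.comp Complex.measurable_re Complex.measurable_re).integrable_mul hX.re hY.re)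
  have hri : Integrable (fun ω => (X ω).re * (Y ω).im) μ :=
    ((h.comp Complex.measurable_re Complex.measurable_im).integrable_mul hX.re hY.im)
  have hir : Integrable (fun ω => (X ω).im * (Y ω).re) μ :=
    ((h.comp Complex.measurable_im Complex.measurable_re).integrable_mul hX.im hY.re)
  have hii : Integrable (fun ω => (X ω).im * (Y ω).im) μ :=
    ((h.comp Complex.measurable_im Complex.measurable_im).integrable_mul hX.im hY.im)
  have err : ∫ ω, (X ω).re * (Y ω).re ∂μ = (∫ ω, (X ω).re ∂μ) * ∫ ω, (Y ω).re ∂μ :=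
    (h.comp Complex.measurable_re Complex.measurable_re).integral_fun_mul_eq_mul_integral hX.re.aestronglyMeasurable hY.re.aestronglyMeasurable
  have eri : ∫ ω, (X ω).re * (Y ω).im ∂μ = (∫ ω, (X ω).re ∂μ) * ∫ ω, (Y ω).im ∂μ :=
    (h.comp Complex.measurable_re Complex.measurable_im).integral_fun_mul_eq_mul_integral hX.re.aestronglyMeasurable hY.im.aestronglyMeasurable
  have eir : ∫ ω, (X ω).im * (Y ω).re ∂μ = (∫ ω, (X ω).im ∂μ) * ∫ ω, (Y ω).re ∂μ :=
    (h.comp Complex.measurable_im Complex.measurable_re).integral_fun_mul_eq_mul_integral hX.im.aestronglyMeasurable hY.re.aestronglyMeasurable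
  have eii : ∫ ω, (X ω).im * (Y ω).im ∂μ = (∫ ω, (X ω).im ∂μ) * ∫ ω, (Y ω).im ∂μ :=
    (h.comp Complex.measurable_im Complex.measurable_im).integral_fun_mul_eq_mul_integral hX.im.aestronglyMeasurable hY.im.aestronglyMeasurable
  have hXr := integral_re hX; have hXi := integral_im hX
  have hYr := integral_re hY; have hYi := integral_im hY
  simp only [RCLike.re_to_complex, RCLike.im_to_complex] at hXr hXi hYr hYi
  apply Complex.ext
  · have h1 := integral_re hXY
    simp only [RCLike.re_to_complex] at h1
    rw [← h1, Complex.mul_re, ← hXr, ← hXi, ← hYr, ← hYi, ← err, ← eii]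
    rw [← integral_sub hrr hii]
    simp [Complex.mul_re]
  · have h1 := integral_im hXY
    simp only [RCLike.im_to_complex] at h1
    rw [← h1, Complex.mul_im, ← hXr, ← hXi, ← hYr, ← hYi, ← eri, ← eir]
    rw [← integral_add hri hir]
    simp [Complex.mul_im]

lemma exp_I_mul_eq (x : ℝ) :
    Complex.exp (Complex.I * x) = (Real.cos x : ℂ) + (Real.sin x : ℂ) * Complex.I := by
  rw [mul_comm, Complex.exp_mul_I, Complex.ofReal_cos, Complex.ofReal_sin]

lemma integrable_cos_comp [IsProbabilityMeasure μ] {T : Ω → ℝ} (hT : Measurable T) :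
    Integrable (fun ω => Real.cos (T ω)) μ := by
  refine (integrable_const (1:ℝ)).mono' (hT.cos.aestronglyMeasurable) ?_
  exact Filter.Eventually.of_forall fun ω => by
    simpa using Real.abs_cos_le_one (T ω)

lemma integrable_sin_comp [IsProbabilityMeasure μ] {T : Ω → ℝ} (hT : Measurable T) :
    Integrable (fun ω => Real.sin (T ω)) μ := by
  refine (integrable_const (1:ℝ)).mono' (hT.sin.aestronglyMeasurable) ?_
  exact Filter.Eventually.of_forall fun ω => by
    simpa using Real.abs_sin_le_one (T ω)

lemma integral_exp_I_mul [IsProbabilityMeasure μ] {T : Ω → ℝ} (hT : Measurable T) {χ : ℝ}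
    (hc : ∫ ω, Real.cos (T ω) ∂μ = χ) (hs : ∫ ω, Real.sin (T ω) ∂μ = 0) :
    ∫ ω, Complex.exp (Complex.I * T ω) ∂μ = (χ : ℂ) := by
  simp_rw [exp_I_mul_eq]
  have h1 : Integrable (fun ω => ((Real.cos (T ω) : ℝ) : ℂ)) μ := (integrable_cos_comp hT).ofReal
  have h2 : Integrable (fun ω => ((Real.sin (T ω) : ℝ) : ℂ) * Complex.I) μ :=
    ((integrable_sin_comp hT).ofReal).mul_const Complex.I
  have hco : ∫ ω, ((Real.cos (T ω) : ℝ) : ℂ) ∂μ = ((∫ ω, Real.cos (T ω) ∂μ : ℝ) : ℂ) :=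
    integral_ofReal
  have hso : ∫ ω, ((Real.sin (T ω) : ℝ) : ℂ) ∂μ = ((∫ ω, Real.sin (T ω) ∂μ : ℝ) : ℂ) :=
    integral_ofReal
  rw [integral_add h1 h2, integral_mul_const, hco, hso, hc, hs]
  simp

lemma double_sum_pair {L : ℕ} (F : Fin L → Fin L → ℝ) (hsymm : ∀ m n, F m n = F n m) :
    ∑ k : Fin L, ∑ l : Fin L, F k l =
      (∑ k : Fin L, F k k) + 2 * ∑ n : Fin L, ∑ m ∈ Finset.univ.filter (fun m => m < n), F n m := by
  have split : ∀ k l : Fin L, F k l =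
      (if k = l then F k l else 0) + ((if l < k then F k l else 0) + (if k < l then F k l else 0)) := by
    intro k l
    rcases lt_trichotomy k l with h|h|h
    · simp [h, ne_of_lt h, lt_asymm h, lt_irrefl]
    · simp [h, lt_irrefl]
    · simp [h, (ne_of_lt h).symm, lt_asymm h]
  calc ∑ k : Fin L, ∑ l : Fin L, F k l
      = ∑ k : Fin L, ∑ l : Fin L, ((if k = l then F k l else 0)
        + ((if l < k then F k l else 0) + (if k < l then F k l else 0))) := by
        exact Finset.sum_congr rfl fun k _ => Finset.sum_congr rfl fun l _ => split k l
    _ = (∑ k : Fin L, F k k)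
        + ((∑ k : Fin L, ∑ l ∈ Finset.univ.filter (fun l => l < k), F k l)
          + (∑ k : Fin L, ∑ l : Fin L, if k < l then F k l else 0)) := by
        simp_rw [Finset.sum_add_distrib, Finset.sum_ite_eq, Finset.sum_filter]
        simp
    _ = (∑ k : Fin L, F k k)
        + 2 * ∑ n : Fin L, ∑ m ∈ Finset.univ.filter (fun m => m < n), F n m := by
        rw [Finset.sum_comm (f := fun k l => if k < l then F k l else 0)]
        simp_rw [← Finset.sum_filter]
        have : ∀ n : Fin L, ∑ m ∈ Finset.univ.filter (fun m => m < n), F m n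
            = ∑ m ∈ Finset.univ.filter (fun m => m < n), F n m :=
          fun n => Finset.sum_congr rfl fun m _ => hsymm m n
        simp_rw [this]
        ring

lemma conj_exp_I (x : ℝ) :
    (starRingEnd ℂ) (Complex.exp (Complex.I * x)) = Complex.exp (-(Complex.I * x)) := by
  rw [← Complex.exp_conj]
  congr 1
  simp [Complex.conj_I]

lemma exp_I_mul_conj (x : ℝ) :
    Complex.exp (Complex.I * x) * (starRingEnd ℂ) (Complex.exp (Complex.I * x)) = 1 := by
  rw [conj_exp_I, ← Complex.exp_add]
  simp


theorem meas_conj' : Measurable (starRingEnd ℂ) := Complex.continuous_conj.measurable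
attribute [fun_prop] meas_conj'

lemma abs_exp_I (x : ℝ) : ‖Complex.exp (Complex.I * x)‖ = 1 := by
  rw [Complex.norm_exp]; simp

lemma re_ofReal_mul_exp (r x : ℝ) :
    (((r : ℂ)) * Complex.exp (Complex.I * x)).re = r * Real.cos x := by
  rw [exp_I_mul_eq, Complex.re_ofReal_mul]
  simp [Complex.add_re, Complex.mul_re, -Complex.ofReal_cos, -Complex.ofReal_sin]

lemma integrable_exp_I [IsProbabilityMeasure μ] {T : Ω → ℝ} (hT : Measurable T) :
    Integrable (fun ω => Complex.exp (Complex.I * T ω)) μ := by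
  refine (integrable_const (1:ℝ)).mono' ?_ (Filter.Eventually.of_forall fun ω => ?_)
  · exact (Complex.continuous_exp.measurable.comp
      ((Complex.measurable_ofReal.comp hT).const_mul Complex.I)).aestronglyMeasurable
  · rw [abs_exp_I]

/-- expectation of an affine (Rician-type) product. -/
lemma A_step [IsProbabilityMeasure μ] {X Y : Ω → ℂ} (hX : MemLp X 2 μ) (hY : MemLp Y 2 μ)
    (hXm : ∫ ω, X ω ∂μ = 0) (hYm : ∫ ω, Y ω ∂μ = 0) {c0 : ℂ}
    (hcov : ∫ ω, X ω * (starRingEnd ℂ) (Y ω) ∂μ = c0) (s t : ℝ) (u v : ℂ) :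
    ∫ ω, ((s : ℂ) * u + (t : ℂ) * X ω) * (starRingEnd ℂ) ((s : ℂ) * v + (t : ℂ) * Y ω) ∂μ
      = ((s : ℂ) * s) * (u * (starRingEnd ℂ) v) + ((t : ℂ) * t) * c0 := by
  have hexp : ∀ ω, ((s : ℂ) * u + (t : ℂ) * X ω) * (starRingEnd ℂ) ((s : ℂ) * v + (t : ℂ) * Y ω)
      = ((s : ℂ) * s) * (u * (starRingEnd ℂ) v)
        + ((((s : ℂ) * u * t) * (starRingEnd ℂ) (Y ω))
          + ((((t : ℂ) * s * (starRingEnd ℂ) v) * X ω)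
            + (((t : ℂ) * t) * (X ω * (starRingEnd ℂ) (Y ω))))) := by
    intro ω
    simp only [map_add, map_mul, Complex.conj_ofReal]
    ring
  have hXi : Integrable X μ := hX.integrable one_le_two
  have hYc : Integrable (fun ω => (starRingEnd ℂ) (Y ω)) μ :=
    (memLp_conj hY).integrable one_le_two
  have hXYi : Integrable (fun ω => X ω * (starRingEnd ℂ) (Y ω)) μ :=
    l2_mul_integrable hX (memLp_conj hY)
  have i2 : Integrable (fun ω => ((s : ℂ) * u * t) * (starRingEnd ℂ) (Y ω)) μ := hYc.const_mul _
  have i3 : Integrable (fun ω => ((t : ℂ) * s * (starRingEnd ℂ) v) * X ω) μ := hXi.const_mul _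
  have i4 : Integrable (fun ω => ((t : ℂ) * t) * (X ω * (starRingEnd ℂ) (Y ω))) μ :=
    hXYi.const_mul _
  have i34 : Integrable (fun ω => ((t : ℂ) * s * (starRingEnd ℂ) v) * X ω
      + ((t : ℂ) * t) * (X ω * (starRingEnd ℂ) (Y ω))) μ := i3.add i4
  have i234 : Integrable (fun ω => ((s : ℂ) * u * t) * (starRingEnd ℂ) (Y ω)
      + (((t : ℂ) * s * (starRingEnd ℂ) v) * X ω
        + ((t : ℂ) * t) * (X ω * (starRingEnd ℂ) (Y ω)))) μ := i2.add i34
  simp_rw [hexp]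
  rw [integral_add (integrable_const _) i234, integral_add i2 i34,
    integral_add i3 i4]
  simp [integral_const_mul, integral_conj, hXm, hYm, hcov]

end Helpers

/-- Second moment of the cascaded Rician channel through an RIS with
deterministic phase-shift matrix `Θ = diag(e^{iθ_1}, …, e^{iθ_L})` and random phase-noise
matrix `Φ = diag(e^{iΔθ_1}, …, e^{iΔθ_L})`, where the `Δθ_ℓ` are independent with
`E[cos Δθ_ℓ] = χ` and `E[sin Δθ_ℓ] = 0`: with LoS components `h̄_{a,ℓ} = e^{i a_ℓ}`,
`h̄_{b,ℓ} = e^{i b_ℓ}`, zero-mean identity-covariance scattered components `h̃_a, h̃_b`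
such that `h̃_a`, `h̃_b` and `(Δθ_1, …, Δθ_L)` are mutually independent, and Rician factors
`ε, β > 0`, the channels `h_a = √(ε/(ε+1)) h̄_a + √(1/(ε+1)) h̃_a` and
`h_b = √(β/(β+1)) h̄_b + √(1/(β+1)) h̃_b` satisfy
`E[|h_b^T Θ Φ h_a|²] = (ε β Γ̃ + L(ε+β) + L)/((ε+1)(β+1))`, where
`Γ̃ = L + 2χ² ∑_{1 ≤ m < n ≤ L} cos ((θ_n + a_n + b_n) - (θ_m + a_m + b_m))`. -/
theorem cascaded_rician_second_moment_phase_noise {Ω : Type*} [MeasurableSpace Ω]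
    (μ : Measure Ω) [IsProbabilityMeasure μ] (L : ℕ) (hL : 1 ≤ L)
    (θ a b : Fin L → ℝ) (ε β χ : ℝ) (hε : 0 < ε) (hβ : 0 < β)
    (Δθ : Fin L → Ω → ℝ) (hΔθ_meas : ∀ ℓ, Measurable (Δθ ℓ))
    (hΔθ_indep : ProbabilityTheory.iIndepFun Δθ μ)
    (hΔθ_cos : ∀ ℓ, ∫ ω, Real.cos (Δθ ℓ ω) ∂μ = χ)
    (hΔθ_sin : ∀ ℓ, ∫ ω, Real.sin (Δθ ℓ ω) ∂μ = 0)
    (hta htb : Ω → Fin L → ℂ)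
    (hta_meas : Measurable hta) (htb_meas : Measurable htb)
    (hta_l2 : ∀ ℓ, MeasureTheory.MemLp (fun ω => hta ω ℓ) 2 μ)
    (htb_l2 : ∀ ℓ, MeasureTheory.MemLp (fun ω => htb ω ℓ) 2 μ)
    (hta_mean : ∀ ℓ, ∫ ω, hta ω ℓ ∂μ = 0) (htb_mean : ∀ ℓ, ∫ ω, htb ω ℓ ∂μ = 0)
    (hta_cov : ∀ k l, ∫ ω, hta ω k * (starRingEnd ℂ) (hta ω l) ∂μ = if k = l then 1 else 0)
    (htb_cov : ∀ k l, ∫ ω, htb ω k * (starRingEnd ℂ) (htb ω l) ∂μ = if k = l then 1 else 0)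
    (hab_indep : ProbabilityTheory.IndepFun hta htb μ)
    (habΔ_indep : ProbabilityTheory.IndepFun (fun ω => (hta ω, htb ω))
      (fun ω => fun ℓ => Δθ ℓ ω) μ)
    (ha hb : Ω → Fin L → ℂ)
    (hha : ∀ ω ℓ, ha ω ℓ = (Real.sqrt (ε / (ε + 1)) : ℂ) * Complex.exp (Complex.I * (a ℓ : ℂ))
      + (Real.sqrt (1 / (ε + 1)) : ℂ) * hta ω ℓ)
    (hhb : ∀ ω ℓ, hb ω ℓ = (Real.sqrt (β / (β + 1)) : ℂ) * Complex.exp (Complex.I * (b ℓ : ℂ))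
      + (Real.sqrt (1 / (β + 1)) : ℂ) * htb ω ℓ) :
    ∫ ω, ‖(∑ ℓ : Fin L,
        hb ω ℓ * Complex.exp (Complex.I * (θ ℓ : ℂ)) *
          Complex.exp (Complex.I * (Δθ ℓ ω : ℂ)) * ha ω ℓ)‖ ^ 2 ∂μ =
      (ε * β * ((L : ℝ) + 2 * χ ^ 2 *
          ∑ n : Fin L, ∑ m ∈ Finset.univ.filter (fun m => m < n),
            Real.cos ((θ n + a n + b n) - (θ m + a m + b m)))
        + (L : ℝ) * (ε + β) + (L : ℝ)) / ((ε + 1) * (β + 1)) := by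
  
  classical
  have hε1 : ε + 1 ≠ 0 := by positivity
  have hβ1 : β + 1 ≠ 0 := by positivity
  have hca0 : (0:ℝ) ≤ ε / (ε + 1) := by positivity
  have hda0 : (0:ℝ) ≤ 1 / (ε + 1) := by positivity
  have hcb0 : (0:ℝ) ≤ β / (β + 1) := by positivity
  have hdb0 : (0:ℝ) ≤ 1 / (β + 1) := by positivity
  have hsa : ((Real.sqrt (ε / (ε + 1)) : ℂ)) * ((Real.sqrt (ε / (ε + 1)) : ℂ))
      = ((ε / (ε + 1) : ℝ) : ℂ) := by
    rw [← Complex.ofReal_mul, Real.mul_self_sqrt hca0]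
  have hda : ((Real.sqrt (1 / (ε + 1)) : ℂ)) * ((Real.sqrt (1 / (ε + 1)) : ℂ))
      = ((1 / (ε + 1) : ℝ) : ℂ) := by
    rw [← Complex.ofReal_mul, Real.mul_self_sqrt hda0]
  have hsb : ((Real.sqrt (β / (β + 1)) : ℂ)) * ((Real.sqrt (β / (β + 1)) : ℂ))
      = ((β / (β + 1) : ℝ) : ℂ) := by
    rw [← Complex.ofReal_mul, Real.mul_self_sqrt hcb0]
  have hdb : ((Real.sqrt (1 / (β + 1)) : ℂ)) * ((Real.sqrt (1 / (β + 1)) : ℂ))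
      = ((1 / (β + 1) : ℝ) : ℂ) := by
    rw [← Complex.ofReal_mul, Real.mul_self_sqrt hdb0]
  have haK_l2 : ∀ k, MemLp (fun ω => ha ω k) 2 μ := by
    intro k
    have hk : (fun ω => ha ω k) = fun ω =>
        (Real.sqrt (ε / (ε + 1)) : ℂ) * Complex.exp (Complex.I * (a k : ℂ))
          + (Real.sqrt (1 / (ε + 1)) : ℂ) * hta ω k := funext fun ω => hha ω k
    rw [hk]
    exact (memLp_const ((Real.sqrt (ε / (ε + 1)) : ℂ) * Complex.exp (Complex.I * (a k : ℂ)))).add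
      ((hta_l2 k).const_mul (Real.sqrt (1 / (ε + 1)) : ℂ))
  have hbK_l2 : ∀ k, MemLp (fun ω => hb ω k) 2 μ := by
    intro k
    have hk : (fun ω => hb ω k) = fun ω =>
        (Real.sqrt (β / (β + 1)) : ℂ) * Complex.exp (Complex.I * (b k : ℂ))
          + (Real.sqrt (1 / (β + 1)) : ℂ) * htb ω k := funext fun ω => hhb ω k
    rw [hk]
    exact (memLp_const ((Real.sqrt (β / (β + 1)) : ℂ) * Complex.exp (Complex.I * (b k : ℂ)))).add
      ((htb_l2 k).const_mul (Real.sqrt (1 / (β + 1)) : ℂ))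
  set t : Fin L → Fin L → Ω → ℂ := fun k l ω =>
    (hb ω k * Complex.exp (Complex.I * (θ k : ℂ)) * Complex.exp (Complex.I * (Δθ k ω : ℂ)) * ha ω k)
    * (starRingEnd ℂ) (hb ω l * Complex.exp (Complex.I * (θ l : ℂ))
        * Complex.exp (Complex.I * (Δθ l ω : ℂ)) * ha ω l) with ht_def
  have key : ∀ k l : Fin L, Integrable (t k l) μ ∧
      (∫ ω, t k l ω ∂μ).re = (if k = l then 1
        else χ ^ 2 * (ε / (ε + 1)) * (β / (β + 1))
          * Real.cos ((θ k + a k + b k) - (θ l + a l + b l))) := by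
    intro k l
    -- deterministic pieces
    have hg1eq : (fun ω => ha ω k * (starRingEnd ℂ) (ha ω l)) =
        (fun v : Fin L → ℂ =>
          ((Real.sqrt (ε / (ε + 1)) : ℂ) * Complex.exp (Complex.I * (a k : ℂ))
              + (Real.sqrt (1 / (ε + 1)) : ℂ) * v k)
          * (starRingEnd ℂ) ((Real.sqrt (ε / (ε + 1)) : ℂ) * Complex.exp (Complex.I * (a l : ℂ))
              + (Real.sqrt (1 / (ε + 1)) : ℂ) * v l)) ∘ hta := by
      funext ω; simp only [Function.comp_apply, hha]
    have hg2eq : (fun ω => hb ω k * (starRingEnd ℂ) (hb ω l)) =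
        (fun v : Fin L → ℂ =>
          ((Real.sqrt (β / (β + 1)) : ℂ) * Complex.exp (Complex.I * (b k : ℂ))
              + (Real.sqrt (1 / (β + 1)) : ℂ) * v k)
          * (starRingEnd ℂ) ((Real.sqrt (β / (β + 1)) : ℂ) * Complex.exp (Complex.I * (b l : ℂ))
              + (Real.sqrt (1 / (β + 1)) : ℂ) * v l)) ∘ htb := by
      funext ω; simp only [Function.comp_apply, hhb]
    have hg1int : Integrable (fun ω => ha ω k * (starRingEnd ℂ) (ha ω l)) μ :=
      l2_mul_integrable (haK_l2 k) (memLp_conj (haK_l2 l))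
    have hg2int : Integrable (fun ω => hb ω k * (starRingEnd ℂ) (hb ω l)) μ :=
      l2_mul_integrable (hbK_l2 k) (memLp_conj (hbK_l2 l))
    have hgind : IndepFun (fun ω => ha ω k * (starRingEnd ℂ) (ha ω l))
        (fun ω => hb ω k * (starRingEnd ℂ) (hb ω l)) μ := by
      rw [hg1eq, hg2eq]
      exact hab_indep.comp (by fun_prop) (by fun_prop)
    have hggint : Integrable (fun ω => (ha ω k * (starRingEnd ℂ) (ha ω l))
        * (hb ω k * (starRingEnd ℂ) (hb ω l))) μ := hgind.integrable_mul hg1int hg2int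
    -- phase-noise pieces
    have hZZmeas : Measurable (fun ω => Complex.exp (Complex.I * (Δθ k ω : ℂ))
        * (starRingEnd ℂ) (Complex.exp (Complex.I * (Δθ l ω : ℂ)))) := by
      have hk := hΔθ_meas k; have hl := hΔθ_meas l; fun_prop
    have hZZbd : ∀ ω, ‖Complex.exp (Complex.I * (Δθ k ω : ℂ))
        * (starRingEnd ℂ) (Complex.exp (Complex.I * (Δθ l ω : ℂ)))‖ ≤ 1 := by
      intro ω
      rw [norm_mul, Complex.norm_conj,
        abs_exp_I, abs_exp_I]
      norm_num
    have hZZint : Integrable (fun ω => Complex.exp (Complex.I * (Δθ k ω : ℂ))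
        * (starRingEnd ℂ) (Complex.exp (Complex.I * (Δθ l ω : ℂ)))) μ :=
      (integrable_const (1:ℝ)).mono' hZZmeas.aestronglyMeasurable
        (Filter.Eventually.of_forall hZZbd)
    have hZZg_int : Integrable (fun ω =>
        (Complex.exp (Complex.I * (Δθ k ω : ℂ))
          * (starRingEnd ℂ) (Complex.exp (Complex.I * (Δθ l ω : ℂ))))
        * ((ha ω k * (starRingEnd ℂ) (ha ω l)) * (hb ω k * (starRingEnd ℂ) (hb ω l)))) μ :=
      hggint.bdd_mul (c := 1) hZZmeas.aestronglyMeasurable (Filter.Eventually.of_forall hZZbd)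
    -- pointwise factorisation of t
    have htpt : ∀ ω, t k l ω =
        (Complex.exp (Complex.I * (θ k : ℂ)) * (starRingEnd ℂ) (Complex.exp (Complex.I * (θ l : ℂ)))) *
        ((Complex.exp (Complex.I * (Δθ k ω : ℂ))
            * (starRingEnd ℂ) (Complex.exp (Complex.I * (Δθ l ω : ℂ)))) *
          ((ha ω k * (starRingEnd ℂ) (ha ω l)) * (hb ω k * (starRingEnd ℂ) (hb ω l)))) := by
      intro ω
      simp only [ht_def, map_mul]
      ring
    have htfun : t k l = fun ω =>
        (Complex.exp (Complex.I * (θ k : ℂ)) * (starRingEnd ℂ) (Complex.exp (Complex.I * (θ l : ℂ)))) *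
        ((Complex.exp (Complex.I * (Δθ k ω : ℂ))
            * (starRingEnd ℂ) (Complex.exp (Complex.I * (Δθ l ω : ℂ)))) *
          ((ha ω k * (starRingEnd ℂ) (ha ω l)) * (hb ω k * (starRingEnd ℂ) (hb ω l)))) :=
      funext htpt
    have htint : Integrable (t k l) μ := by
      rw [htfun]; exact hZZg_int.const_mul _
    refine ⟨htint, ?_⟩
    -- independence of the scattering part and the phase noise
    have hindZg : IndepFun
        (fun ω => (ha ω k * (starRingEnd ℂ) (ha ω l)) * (hb ω k * (starRingEnd ℂ) (hb ω l)))
        (fun ω => Complex.exp (Complex.I * (Δθ k ω : ℂ))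
          * (starRingEnd ℂ) (Complex.exp (Complex.I * (Δθ l ω : ℂ)))) μ := by
      have e1 : (fun ω => (ha ω k * (starRingEnd ℂ) (ha ω l))
            * (hb ω k * (starRingEnd ℂ) (hb ω l))) =
          (fun p : (Fin L → ℂ) × (Fin L → ℂ) =>
            (((Real.sqrt (ε / (ε + 1)) : ℂ) * Complex.exp (Complex.I * (a k : ℂ))
                + (Real.sqrt (1 / (ε + 1)) : ℂ) * p.1 k)
              * (starRingEnd ℂ) ((Real.sqrt (ε / (ε + 1)) : ℂ) * Complex.exp (Complex.I * (a l : ℂ))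
                + (Real.sqrt (1 / (ε + 1)) : ℂ) * p.1 l))
            * (((Real.sqrt (β / (β + 1)) : ℂ) * Complex.exp (Complex.I * (b k : ℂ))
                + (Real.sqrt (1 / (β + 1)) : ℂ) * p.2 k)
              * (starRingEnd ℂ) ((Real.sqrt (β / (β + 1)) : ℂ) * Complex.exp (Complex.I * (b l : ℂ))
                + (Real.sqrt (1 / (β + 1)) : ℂ) * p.2 l)))
            ∘ (fun ω => (hta ω, htb ω)) := by
        funext ω; simp only [Function.comp_apply, hha, hhb]
      have e2 : (fun ω => Complex.exp (Complex.I * (Δθ k ω : ℂ))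
            * (starRingEnd ℂ) (Complex.exp (Complex.I * (Δθ l ω : ℂ)))) =
          (fun v : Fin L → ℝ => Complex.exp (Complex.I * (v k : ℂ))
            * (starRingEnd ℂ) (Complex.exp (Complex.I * (v l : ℂ))))
            ∘ (fun ω => fun ℓ => Δθ ℓ ω) := rfl
      rw [e1, e2]
      exact habΔ_indep.comp (by fun_prop) (by fun_prop)
    -- value of the phase factor integral
    have hZZval : ∫ ω, Complex.exp (Complex.I * (Δθ k ω : ℂ))
        * (starRingEnd ℂ) (Complex.exp (Complex.I * (Δθ l ω : ℂ))) ∂μ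
        = (if k = l then 1 else (χ : ℂ) * (χ : ℂ)) := by
      by_cases hkl : k = l
      · subst hkl
        simp only [exp_I_mul_conj]
        simp
      · have hrw : ∀ ω, Complex.exp (Complex.I * (Δθ k ω : ℂ))
            * (starRingEnd ℂ) (Complex.exp (Complex.I * (Δθ l ω : ℂ)))
            = Complex.exp (Complex.I * (Δθ k ω : ℂ))
              * Complex.exp (Complex.I * ((-(Δθ l ω) : ℝ) : ℂ)) := by
          intro ω
          rw [conj_exp_I]
          congr 1
          push_cast
          ring
        have hXYind0 : IndepFun
            ((fun x : ℝ => Complex.exp (Complex.I * (x : ℂ))) ∘ Δθ k)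
            ((fun x : ℝ => Complex.exp (Complex.I * ((-x : ℝ) : ℂ))) ∘ Δθ l) μ :=
          (hΔθ_indep.indepFun hkl).comp (by fun_prop) (by fun_prop)
        have hXYind : IndepFun (fun ω => Complex.exp (Complex.I * (Δθ k ω : ℂ)))
            (fun ω => Complex.exp (Complex.I * ((-(Δθ l ω) : ℝ) : ℂ))) μ := hXYind0
        have hXint : Integrable (fun ω => Complex.exp (Complex.I * (Δθ k ω : ℂ))) μ :=
          integrable_exp_I (hΔθ_meas k)
        have hYint : Integrable (fun ω => Complex.exp (Complex.I * ((-(Δθ l ω) : ℝ) : ℂ))) μ :=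
          integrable_exp_I ((hΔθ_meas l).neg)
        have hc' : ∫ ω, Real.cos (-(Δθ l ω)) ∂μ = χ := by
          simp_rw [Real.cos_neg]; exact hΔθ_cos l
        have hs' : ∫ ω, Real.sin (-(Δθ l ω)) ∂μ = 0 := by
          simp_rw [Real.sin_neg]
          rw [integral_neg, hΔθ_sin l, neg_zero]
        simp_rw [hrw]
        rw [indep_integral_mul_complex hXYind hXint hYint,
          integral_exp_I_mul (hΔθ_meas k) (hΔθ_cos k) (hΔθ_sin k),
          integral_exp_I_mul (show Measurable (fun ω => -(Δθ l ω)) from (hΔθ_meas l).neg) hc' hs',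
          if_neg hkl]
    -- value of the channel covariance integrals
    have hAval : ∫ ω, ha ω k * (starRingEnd ℂ) (ha ω l) ∂μ =
        ((ε / (ε + 1) : ℝ) : ℂ)
          * (Complex.exp (Complex.I * (a k : ℂ)) * (starRingEnd ℂ) (Complex.exp (Complex.I * (a l : ℂ))))
        + ((1 / (ε + 1) : ℝ) : ℂ) * (if k = l then 1 else 0) := by
      have h0 := A_step (μ := μ) (hta_l2 k) (hta_l2 l) (hta_mean k) (hta_mean l) (hta_cov k l)
        (Real.sqrt (ε / (ε + 1))) (Real.sqrt (1 / (ε + 1)))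
        (Complex.exp (Complex.I * (a k : ℂ))) (Complex.exp (Complex.I * (a l : ℂ)))
      rw [hsa, hda] at h0
      rw [← h0]
      refine integral_congr_ae (Filter.Eventually.of_forall fun ω => ?_)
      simp only [hha]
    have hBval : ∫ ω, hb ω k * (starRingEnd ℂ) (hb ω l) ∂μ =
        ((β / (β + 1) : ℝ) : ℂ)
          * (Complex.exp (Complex.I * (b k : ℂ)) * (starRingEnd ℂ) (Complex.exp (Complex.I * (b l : ℂ))))
        + ((1 / (β + 1) : ℝ) : ℂ) * (if k = l then 1 else 0) := by
      have h0 := A_step (μ := μ) (htb_l2 k) (htb_l2 l) (htb_mean k) (htb_mean l) (htb_cov k l)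
        (Real.sqrt (β / (β + 1))) (Real.sqrt (1 / (β + 1)))
        (Complex.exp (Complex.I * (b k : ℂ))) (Complex.exp (Complex.I * (b l : ℂ)))
      rw [hsb, hdb] at h0
      rw [← h0]
      refine integral_congr_ae (Filter.Eventually.of_forall fun ω => ?_)
      simp only [hhb]
    -- put everything together
    have hsplit : ∫ ω, t k l ω ∂μ =
        (Complex.exp (Complex.I * (θ k : ℂ)) * (starRingEnd ℂ) (Complex.exp (Complex.I * (θ l : ℂ)))) *
        ((if k = l then 1 else (χ : ℂ) * (χ : ℂ)) *
          ((((ε / (ε + 1) : ℝ) : ℂ)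
              * (Complex.exp (Complex.I * (a k : ℂ))
                * (starRingEnd ℂ) (Complex.exp (Complex.I * (a l : ℂ))))
            + ((1 / (ε + 1) : ℝ) : ℂ) * (if k = l then 1 else 0))
          * (((β / (β + 1) : ℝ) : ℂ)
              * (Complex.exp (Complex.I * (b k : ℂ))
                * (starRingEnd ℂ) (Complex.exp (Complex.I * (b l : ℂ))))
            + ((1 / (β + 1) : ℝ) : ℂ) * (if k = l then 1 else 0)))) := by
      rw [htfun, integral_const_mul,
        indep_integral_mul_complex hindZg.symm hZZint hggint,
        indep_integral_mul_complex hgind hg1int hg2int, hZZval, hAval, hBval]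
    rw [hsplit]
    by_cases hkl : k = l
    · subst hkl
      simp only [eq_self_iff_true, if_true]
      simp only [exp_I_mul_conj, mul_one, one_mul]
      rw [show (((ε / (ε + 1) : ℝ) : ℂ) + ((1 / (ε + 1) : ℝ) : ℂ))
          * (((β / (β + 1) : ℝ) : ℂ) + ((1 / (β + 1) : ℝ) : ℂ))
          = (((ε / (ε + 1) + 1 / (ε + 1)) * (β / (β + 1) + 1 / (β + 1)) : ℝ) : ℂ) by push_cast; ring,
        Complex.ofReal_re]
      field_simp
    · simp only [if_neg hkl]
      have hcomb : (Complex.exp (Complex.I * (θ k : ℂ))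
            * (starRingEnd ℂ) (Complex.exp (Complex.I * (θ l : ℂ)))) *
          (((χ : ℂ) * (χ : ℂ)) *
            ((((ε / (ε + 1) : ℝ) : ℂ)
                * (Complex.exp (Complex.I * (a k : ℂ))
                  * (starRingEnd ℂ) (Complex.exp (Complex.I * (a l : ℂ))))
              + ((1 / (ε + 1) : ℝ) : ℂ) * 0)
            * (((β / (β + 1) : ℝ) : ℂ)
                * (Complex.exp (Complex.I * (b k : ℂ))
                  * (starRingEnd ℂ) (Complex.exp (Complex.I * (b l : ℂ))))
              + ((1 / (β + 1) : ℝ) : ℂ) * 0)))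
          = ((χ ^ 2 * (ε / (ε + 1)) * (β / (β + 1)) : ℝ) : ℂ)
            * Complex.exp (Complex.I * (((θ k + a k + b k) - (θ l + a l + b l) : ℝ) : ℂ)) := by
        rw [conj_exp_I, conj_exp_I, conj_exp_I, mul_zero, add_zero, mul_zero, add_zero]
        calc (Complex.exp (Complex.I * (θ k : ℂ)) * Complex.exp (-(Complex.I * (θ l : ℂ)))) *
            (((χ : ℂ) * (χ : ℂ)) *
              ((((ε / (ε + 1) : ℝ) : ℂ)
                  * (Complex.exp (Complex.I * (a k : ℂ)) * Complex.exp (-(Complex.I * (a l : ℂ)))))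
              * (((β / (β + 1) : ℝ) : ℂ)
                  * (Complex.exp (Complex.I * (b k : ℂ)) * Complex.exp (-(Complex.I * (b l : ℂ)))))))
            = ((χ : ℂ) * (χ : ℂ) * ((ε / (ε + 1) : ℝ) : ℂ) * ((β / (β + 1) : ℝ) : ℂ)) *
              (Complex.exp (Complex.I * (θ k : ℂ)) * (Complex.exp (-(Complex.I * (θ l : ℂ))) *
                (Complex.exp (Complex.I * (a k : ℂ)) * (Complex.exp (-(Complex.I * (a l : ℂ))) *
                  (Complex.exp (Complex.I * (b k : ℂ)) * Complex.exp (-(Complex.I * (b l : ℂ)))))))) := by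
              ring
          _ = ((χ : ℂ) * (χ : ℂ) * ((ε / (ε + 1) : ℝ) : ℂ) * ((β / (β + 1) : ℝ) : ℂ)) *
              Complex.exp (Complex.I * (θ k : ℂ) + (-(Complex.I * (θ l : ℂ)) +
                (Complex.I * (a k : ℂ) + (-(Complex.I * (a l : ℂ)) +
                  (Complex.I * (b k : ℂ) + -(Complex.I * (b l : ℂ))))))) := by
              rw [← Complex.exp_add, ← Complex.exp_add, ← Complex.exp_add, ← Complex.exp_add,
                ← Complex.exp_add]
          _ = ((χ ^ 2 * (ε / (ε + 1)) * (β / (β + 1)) : ℝ) : ℂ)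
              * Complex.exp (Complex.I * (((θ k + a k + b k) - (θ l + a l + b l) : ℝ) : ℂ)) := by
              rw [show Complex.I * (θ k : ℂ) + (-(Complex.I * (θ l : ℂ)) +
                  (Complex.I * (a k : ℂ) + (-(Complex.I * (a l : ℂ)) +
                    (Complex.I * (b k : ℂ) + -(Complex.I * (b l : ℂ))))))
                  = Complex.I * (((θ k + a k + b k) - (θ l + a l + b l) : ℝ) : ℂ) by push_cast; ring]
              congr 1
              push_cast
              ring
      rw [hcomb, re_ofReal_mul_exp]
  -- now assemble the full double sum
  have hsum_int : Integrable (fun ω => ∑ k : Fin L, ∑ l : Fin L, t k l ω) μ :=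
    integrable_finset_sum _ fun k _ => integrable_finset_sum _ fun l _ => (key k l).1
  have hIC : ∫ ω, (∑ k : Fin L, ∑ l : Fin L, t k l ω) ∂μ
      = ∑ k : Fin L, ∑ l : Fin L, ∫ ω, t k l ω ∂μ := by
    rw [integral_finset_sum _ fun k _ => integrable_finset_sum _ fun l _ => (key k l).1]
    exact Finset.sum_congr rfl fun k _ => integral_finset_sum _ fun l _ => (key k l).1
  have hstep1 : ∫ ω, ‖(∑ ℓ : Fin L,
        hb ω ℓ * Complex.exp (Complex.I * (θ ℓ : ℂ)) *
          Complex.exp (Complex.I * (Δθ ℓ ω : ℂ)) * ha ω ℓ)‖ ^ 2 ∂μ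
      = ∫ ω, (∑ k : Fin L, ∑ l : Fin L, t k l ω).re ∂μ := by
    refine integral_congr_ae (Filter.Eventually.of_forall fun ω => ?_)
    have habs : ∀ z : ℂ, ‖z‖ ^ 2 = (z * (starRingEnd ℂ) z).re := by
      intro z; rw [Complex.mul_conj]; simp [Complex.sq_norm]
    beta_reduce
    rw [habs, map_sum, Finset.sum_mul_sum]
  have hstep2 : ∫ ω, (∑ k : Fin L, ∑ l : Fin L, t k l ω).re ∂μ
      = ∑ k : Fin L, ∑ l : Fin L, (∫ ω, t k l ω ∂μ).re := by
    have h1 := integral_re (μ := μ) (f := fun ω => ∑ k : Fin L, ∑ l : Fin L, t k l ω) hsum_int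
    simp only [RCLike.re_to_complex] at h1
    rw [h1, hIC, Complex.re_sum]
    exact Finset.sum_congr rfl fun k _ => Complex.re_sum _ _
  rw [hstep1, hstep2]
  have hstep3 : ∑ k : Fin L, ∑ l : Fin L, (∫ ω, t k l ω ∂μ).re
      = ∑ k : Fin L, ∑ l : Fin L, (if k = l then 1
        else χ ^ 2 * (ε / (ε + 1)) * (β / (β + 1))
          * Real.cos ((θ k + a k + b k) - (θ l + a l + b l))) :=
    Finset.sum_congr rfl fun k _ => Finset.sum_congr rfl fun l _ => (key k l).2
  rw [hstep3]
  have hsymm : ∀ m n : Fin L, (if m = n then 1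
      else χ ^ 2 * (ε / (ε + 1)) * (β / (β + 1))
        * Real.cos ((θ m + a m + b m) - (θ n + a n + b n)))
      = (if n = m then 1
      else χ ^ 2 * (ε / (ε + 1)) * (β / (β + 1))
        * Real.cos ((θ n + a n + b n) - (θ m + a m + b m))) := by
    intro m n
    by_cases h : m = n
    · simp [h]
    · rw [if_neg h, if_neg (Ne.symm h), ← neg_sub ((θ n + a n + b n)) ((θ m + a m + b m)),
        Real.cos_neg]
  rw [double_sum_pair _ hsymm]
  have hdiag : ∑ k : Fin L, (if k = k then (1:ℝ)
      else χ ^ 2 * (ε / (ε + 1)) * (β / (β + 1))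
        * Real.cos ((θ k + a k + b k) - (θ k + a k + b k))) = (L : ℝ) := by
    simp
  have hoff : ∀ n : Fin L, ∑ m ∈ Finset.univ.filter (fun m => m < n),
      (if n = m then (1:ℝ)
        else χ ^ 2 * (ε / (ε + 1)) * (β / (β + 1))
          * Real.cos ((θ n + a n + b n) - (θ m + a m + b m)))
      = χ ^ 2 * (ε / (ε + 1)) * (β / (β + 1)) *
        ∑ m ∈ Finset.univ.filter (fun m => m < n),
          Real.cos ((θ n + a n + b n) - (θ m + a m + b m)) := by
    intro n
    rw [Finset.mul_sum]
    refine Finset.sum_congr rfl fun m hm => ?_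
    rw [Finset.mem_filter] at hm
    rw [if_neg (Ne.symm (ne_of_lt hm.2))]
  have hoff2 : (∑ n : Fin L, ∑ m ∈ Finset.univ.filter (fun m => m < n),
      (if n = m then (1:ℝ)
        else χ ^ 2 * (ε / (ε + 1)) * (β / (β + 1))
          * Real.cos ((θ n + a n + b n) - (θ m + a m + b m))))
      = χ ^ 2 * (ε / (ε + 1)) * (β / (β + 1)) *
        ∑ n : Fin L, ∑ m ∈ Finset.univ.filter (fun m => m < n),
          Real.cos ((θ n + a n + b n) - (θ m + a m + b m)) := by
    rw [Finset.mul_sum]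
    exact Finset.sum_congr rfl fun n _ => hoff n
  rw [hdiag, hoff2]
  field_simp
  ring
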